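/- Let G be a sub-semigroup of GL_2(ℂ). For S = (s_ij) ∈ G, let 𝔄_S := {α ∈ ℂ : s_21·α² + (s_11 − s_22)·α − s_12 = 0}. Then the ℂ-linear span of G equals M_2(ℂ) if and only if ⋂_{S ∈ G} 𝔄_S = ∅ and there exists B = (b_ij) ∈ G with b_21 ≠ 0. -/

import Mathlib

open Matrix

noncomputable section Stmt0Aux

set_option maxHeartbeats 1000000

private abbrev M2' : Type := Matrix (Fin 2) (Fin 2) ℂ

private def kerphi (α : ℂ) : Submodule ℂ M2' where
  carrier := {A : M2' | A 1 0 * α ^ 2 + (A 0 0 - A 1 1) * α - A 0 1 = 0}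
  add_mem' := by
    intro a b ha hb
    simp only [Set.mem_setOf_eq, Matrix.add_apply] at *
    linear_combination ha + hb
  zero_mem' := by simp
  smul_mem' := by
    intro c a ha
    simp only [Set.mem_setOf_eq, Matrix.smul_apply, smul_eq_mul] at *
    linear_combination c * ha

private def ker21' : Submodule ℂ M2' where
  carrier := {A : M2' | A 1 0 = 0}
  add_mem' := by
    intro a b ha hb
    simp only [Set.mem_setOf_eq, Matrix.add_apply] at *
    rw [ha, hb, add_zero]
  zero_mem' := by simp
  smul_mem' := by
    intro c a ha
    simp only [Set.mem_setOf_eq, Matrix.smul_apply, smul_eq_mul] at *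
    rw [ha, mul_zero]

/-- If a submodule contains a conjugated copy of the standard basis, it is everything. -/
private lemma top_of_conj (V : Submodule ℂ M2') (C : M2') (hC : IsUnit C.det)
    {X11 X12 X21 X22 : M2'}
    (m11 : X11 ∈ V) (m12 : X12 ∈ V) (m21 : X21 ∈ V) (m22 : X22 ∈ V)
    (h11 : C * X11 = !![1,0;0,0] * C)
    (h12 : C * X12 = !![0,1;0,0] * C)
    (h21 : C * X21 = !![0,0;1,0] * C)
    (h22 : C * X22 = !![0,0;0,1] * C) : V = ⊤ := by
  rw [eq_top_iff]
  rintro A -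
  have hCi : C⁻¹ * C = 1 := nonsing_inv_mul C hC
  have key : ∀ X E : M2', C * X = E * C → X = C⁻¹ * E * C := by
    intro X E h
    have h2 : C⁻¹ * (C * X) = C⁻¹ * (E * C) := by rw [h]
    rwa [← Matrix.mul_assoc, hCi, Matrix.one_mul, ← Matrix.mul_assoc] at h2
  have e11 := key _ _ h11
  have e12 := key _ _ h12
  have e21 := key _ _ h21
  have e22 := key _ _ h22
  obtain ⟨Y, hYdef⟩ : ∃ Y : M2', Y = C * A * C⁻¹ := ⟨_, rfl⟩
  have hexp : Y = Y 0 0 • !![1,0;0,0] + Y 0 1 • !![0,1;0,0]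
      + Y 1 0 • !![0,0;1,0] + Y 1 1 • !![0,0;0,1] := by
    ext i j
    fin_cases i <;> fin_cases j <;> simp
  have hA : A = Y 0 0 • X11 + Y 0 1 • X12 + Y 1 0 • X21 + Y 1 1 • X22 := by
    have h1 : A = C⁻¹ * Y * C := by
      rw [hYdef, ← Matrix.mul_assoc, ← Matrix.mul_assoc, hCi, Matrix.one_mul,
        Matrix.mul_assoc, hCi, Matrix.mul_one]
    rw [e11, e12, e21, e22]
    rw [h1]
    nth_rewrite 1 [hexp]
    simp only [Matrix.mul_add, Matrix.add_mul, Matrix.mul_smul, Matrix.smul_mul,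
      Matrix.mul_assoc]
  rw [hA]
  exact add_mem (add_mem (add_mem (V.smul_mem _ m11) (V.smul_mem _ m12))
    (V.smul_mem _ m21)) (V.smul_mem _ m22)

private lemma conj_scale {C M E : M2'} {z : ℂ} (hz : z ≠ 0)
    (h : C * M = z • (E * C)) : C * (z⁻¹ • M) = E * C := by
  rw [Matrix.mul_smul, h, smul_smul, inv_mul_cancel₀ hz, one_smul]

/-- For a sub-semigroup `G` of `GL₂(ℂ)` (realized as a set of invertible
2×2 matrices closed under multiplication), the ℂ-span of `G` is all of `M₂(ℂ)` iff
`⋂_{S ∈ G} 𝔄_S = ∅` and some `B ∈ G` has `B 1 0 ≠ 0`. -/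
theorem stmt0 (G : Set (Matrix (Fin 2) (Fin 2) ℂ))
    (hGunit : ∀ A ∈ G, IsUnit A)
    (hGmul : ∀ A ∈ G, ∀ B ∈ G, A * B ∈ G) :
    Submodule.span ℂ G = ⊤ ↔
      ((⋂ S ∈ G, {α : ℂ | S 1 0 * α ^ 2 + (S 0 0 - S 1 1) * α - S 0 1 = 0}) = ∅ ∧
        ∃ B ∈ G, B 1 0 ≠ 0) := by
  constructor
  · intro hspan
    constructor
    · by_contra hne
      obtain ⟨α, hα⟩ := Set.nonempty_iff_ne_empty.mpr hne
      simp only [Set.mem_iInter, Set.mem_setOf_eq] at hα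
      have hle : Submodule.span ℂ G ≤ kerphi α := Submodule.span_le.mpr (fun S hS => hα S hS)
      rw [hspan] at hle
      have h2 : (!![0,(1:ℂ);0,0]) ∈ kerphi α := hle trivial
      simp [kerphi] at h2
    · by_contra hne
      push_neg at hne
      have hle : Submodule.span ℂ G ≤ ker21' := Submodule.span_le.mpr (fun S hS => hne S hS)
      rw [hspan] at hle
      have h2 : (!![0,(0:ℂ);1,0]) ∈ ker21' := hle trivial
      have h3 : (!![0,(0:ℂ);1,0]) 1 0 = 0 := h2
      simp at h3
  · rintro ⟨hempty, B, hBG, hb0⟩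
    have hVmul : ∀ x ∈ Submodule.span ℂ G, ∀ y ∈ Submodule.span ℂ G,
        x * y ∈ Submodule.span ℂ G := by
      intro x hx y hy
      have h1 : Submodule.span ℂ G * Submodule.span ℂ G ≤ Submodule.span ℂ G := by
        rw [Submodule.span_mul_span]
        apply Submodule.span_le.mpr
        rintro _ ⟨a, ha, c, hc, rfl⟩
        exact Submodule.subset_span (hGmul a ha c hc)
      exact h1 (Submodule.mul_mem_mul hx hy)
    set V := Submodule.span ℂ G with hV
    have hBV : B ∈ V := Submodule.subset_span hBG
    have hdet : B 0 0 * B 1 1 - B 0 1 * B 1 0 ≠ 0 := by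
      have h3 := ((Matrix.isUnit_iff_isUnit_det B).mp (hGunit B hBG)).ne_zero
      rwa [Matrix.det_fin_two] at h3
    have hone : (1 : M2') ∈ V := by
      have hid : (1 : M2') = (B 0 0 * B 1 1 - B 0 1 * B 1 0)⁻¹ •
          ((B 0 0 + B 1 1) • B - B * B) := by
        ext i j
        fin_cases i <;> fin_cases j <;>
          · simp only [Matrix.smul_apply, Matrix.sub_apply, Matrix.mul_apply, Fin.sum_univ_two,
              Matrix.one_apply, smul_eq_mul, if_true, if_false, Fin.mk_zero, Fin.mk_one,
              zero_ne_one, one_ne_zero]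
            field_simp
            try ring
            try tauto
      rw [hid]
      exact V.smul_mem _ (sub_mem (V.smul_mem _ hBV) (hVmul B hBV B hBV))
    obtain ⟨b, hbdef⟩ : ∃ y : ℂ, y = B 1 0 := ⟨_, rfl⟩
    have hb : b ≠ 0 := by rw [hbdef]; exact hb0
    obtain ⟨δ, hδ⟩ := IsAlgClosed.exists_pow_nat_eq
      ((B 0 0 - B 1 1)^2 + 4 * b * B 0 1) (n := 2) two_pos
    obtain ⟨α, hαdef⟩ : ∃ y : ℂ, y = (B 1 1 - B 0 0 + δ) / (2*b) := ⟨_, rfl⟩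
    obtain ⟨β, hβdef⟩ : ∃ y : ℂ, y = (B 1 1 - B 0 0 - δ) / (2*b) := ⟨_, rfl⟩
    have hα : b * α^2 + (B 0 0 - B 1 1) * α - B 0 1 = 0 := by
      rw [hαdef]; field_simp; linear_combination hδ
    have hβ : b * β^2 + (B 0 0 - B 1 1) * β - B 0 1 = 0 := by
      rw [hβdef]; field_simp; linear_combination hδ
    have hroot : ∀ γ : ℂ, ∃ S ∈ G, S 1 0 * γ ^ 2 + (S 0 0 - S 1 1) * γ - S 0 1 ≠ 0 := by
      intro γ
      rw [Set.eq_empty_iff_forall_notMem] at hempty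
      have h4 := hempty γ
      simp only [Set.mem_iInter, Set.mem_setOf_eq, not_forall] at h4
      obtain ⟨S, hSG, hSe⟩ := h4
      exact ⟨S, hSG, hSe⟩
    by_cases hd : δ = 0
    · -- double root case
      obtain ⟨S, hSG, hSe⟩ := hroot α
      have hSV : S ∈ V := Submodule.subset_span hSG
      have hd0 : B 0 0 - B 1 1 = -(2*b*α) := by
        rw [hαdef, hd]; field_simp; ring
      have hNs : b • (!![-α, -α^2; 1, α] : M2') = B - (B 0 0 + α*b) • (1 : M2') := by
        ext i j
        fin_cases i <;> fin_cases j <;>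
          · simp only [Matrix.smul_apply, Matrix.sub_apply, Matrix.one_fin_two,
              smul_eq_mul, Fin.mk_zero, Fin.mk_one, Matrix.of_apply, Matrix.cons_val_zero,
              Matrix.cons_val_one, Matrix.head_cons]
            first
            | ring1
            | linear_combination hbdef
            | linear_combination hα - α * hd0
            | linear_combination hd0
      have hN'V : (!![-α, -α^2; 1, α] : M2') ∈ V := by
        have h5 : (!![-α, -α^2; 1, α] : M2') = b⁻¹ • (B - (B 0 0 + α*b) • (1 : M2')) := by
          rw [← hNs, smul_smul, inv_mul_cancel₀ hb, one_smul]
        rw [h5]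
        exact V.smul_mem _ (sub_mem hBV (V.smul_mem _ hone))
      obtain ⟨cS, hcS⟩ : ∃ y : ℂ, y = -(S 1 0 * α^2 + (S 0 0 - S 1 1) * α - S 0 1) := ⟨_, rfl⟩
      have hcS0 : cS ≠ 0 := by rw [hcS]; exact neg_ne_zero.mpr hSe
      have hCu : IsUnit (!![1, α; 0, 1] : M2').det := by
        simp [Matrix.det_fin_two_of]
      have hM1V : S * !![-α, -α^2; 1, α] - (S 1 1 - α * S 1 0) • !![-α, -α^2; 1, α] ∈ V :=
        sub_mem (hVmul S hSV _ hN'V) (V.smul_mem _ hN'V)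
      have hM2V : (!![-α, -α^2; 1, α] : M2') * S - (S 0 0 + α * S 1 0) • !![-α, -α^2; 1, α] ∈ V :=
        sub_mem (hVmul _ hN'V S hSV) (V.smul_mem _ hN'V)
      have I21 : (!![1, α; 0, 1] : M2') * !![-α, -α^2; 1, α] = !![0,0;1,0] * !![1, α; 0, 1] := by
        ext i j
        fin_cases i <;> fin_cases j <;>
          · simp only [Matrix.mul_apply, Fin.sum_univ_two, Fin.mk_zero, Fin.mk_one,
              Matrix.of_apply, Matrix.cons_val_zero, Matrix.cons_val_one, Matrix.head_cons]
            ring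
      have I11 : (!![1, α; 0, 1] : M2') *
          (S * !![-α, -α^2; 1, α] - (S 1 1 - α * S 1 0) • !![-α, -α^2; 1, α])
          = cS • (!![1,0;0,0] * !![1, α; 0, 1]) := by
        rw [hcS]
        ext i j
        fin_cases i <;> fin_cases j <;>
          · simp only [Matrix.mul_apply, Matrix.smul_apply, Matrix.sub_apply, Fin.sum_univ_two,
              smul_eq_mul, Fin.mk_zero, Fin.mk_one, Matrix.of_apply, Matrix.cons_val_zero,
              Matrix.cons_val_one, Matrix.head_cons]
            ring
      have I22 : (!![1, α; 0, 1] : M2') *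
          ((!![-α, -α^2; 1, α] : M2') * S - (S 0 0 + α * S 1 0) • !![-α, -α^2; 1, α])
          = cS • (!![0,0;0,1] * !![1, α; 0, 1]) := by
        rw [hcS]
        ext i j
        fin_cases i <;> fin_cases j <;>
          · simp only [Matrix.mul_apply, Matrix.smul_apply, Matrix.sub_apply, Fin.sum_univ_two,
              smul_eq_mul, Fin.mk_zero, Fin.mk_one, Matrix.of_apply, Matrix.cons_val_zero,
              Matrix.cons_val_one, Matrix.head_cons]
            ring
      have I12 : (!![1, α; 0, 1] : M2') *
          ((S * !![-α, -α^2; 1, α] - (S 1 1 - α * S 1 0) • !![-α, -α^2; 1, α]) * S *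
           ((!![-α, -α^2; 1, α] : M2') * S - (S 0 0 + α * S 1 0) • !![-α, -α^2; 1, α]))
          = (cS^3) • (!![0,1;0,0] * !![1, α; 0, 1]) := by
        rw [hcS]
        ext i j
        fin_cases i <;> fin_cases j <;>
          · simp only [Matrix.mul_apply, Matrix.smul_apply, Matrix.sub_apply, Fin.sum_univ_two,
              smul_eq_mul, Fin.mk_zero, Fin.mk_one, Matrix.of_apply, Matrix.cons_val_zero,
              Matrix.cons_val_one, Matrix.head_cons]
            ring
      exact top_of_conj V _ hCu
        (V.smul_mem _ hM1V)
        (V.smul_mem _ (hVmul _ (hVmul _ hM1V S hSV) _ hM2V))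
        hN'V
        (V.smul_mem _ hM2V)
        (conj_scale hcS0 I11)
        (conj_scale (pow_ne_zero 3 hcS0) I12)
        I21
        (conj_scale hcS0 I22)
    · -- distinct roots case
      obtain ⟨S, hSG, hSe⟩ := hroot α
      obtain ⟨T, hTG, hTe⟩ := hroot β
      have hSV : S ∈ V := Submodule.subset_span hSG
      have hTV : T ∈ V := Submodule.subset_span hTG
      have hab : α - β = δ / b := by rw [hαdef, hβdef]; field_simp; ring
      have hαβ : α - β ≠ 0 := by rw [hab]; exact div_ne_zero hd hb
      have hB01 : B 0 1 = -(b*α*β) := by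
        have h6 : (α - β) * (B 0 1 + b*α*β) = 0 := by linear_combination β*hα - α*hβ
        rcases mul_eq_zero.mp h6 with h7 | h7
        · exact absurd h7 hαβ
        · linear_combination h7
      have hB11 : B 1 1 - B 0 0 = b*(α+β) := by
        have h6 : (α - β) * (B 1 1 - B 0 0 - b*(α+β)) = 0 := by linear_combination hβ - hα
        rcases mul_eq_zero.mp h6 with h7 | h7
        · exact absurd h7 hαβ
        · linear_combination h7
      have hPs : b • (!![-β, -α*β; 1, α] : M2') = B - (B 0 0 + β*b) • (1 : M2') := by
        ext i j
        fin_cases i <;> fin_cases j <;>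
          · simp only [Matrix.smul_apply, Matrix.sub_apply, Matrix.one_fin_two,
              smul_eq_mul, Fin.mk_zero, Fin.mk_one, Matrix.of_apply, Matrix.cons_val_zero,
              Matrix.cons_val_one, Matrix.head_cons]
            first
            | ring1
            | linear_combination hbdef
            | linear_combination -hbdef
            | linear_combination hB01
            | linear_combination -hB01
            | linear_combination hB11
            | linear_combination -hB11
      have hQs : b • (!![α, α*β; -1, -β] : M2') = (B 0 0 + α*b) • (1 : M2') - B := by
        ext i j
        fin_cases i <;> fin_cases j <;>
          · simp only [Matrix.smul_apply, Matrix.sub_apply, Matrix.one_fin_two,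
              smul_eq_mul, Fin.mk_zero, Fin.mk_one, Matrix.of_apply, Matrix.cons_val_zero,
              Matrix.cons_val_one, Matrix.head_cons]
            first
            | ring1
            | linear_combination hbdef
            | linear_combination -hbdef
            | linear_combination hB01
            | linear_combination -hB01
            | linear_combination hB11
            | linear_combination -hB11
      have hP'V : (!![-β, -α*β; 1, α] : M2') ∈ V := by
        have h5 : (!![-β, -α*β; 1, α] : M2') = b⁻¹ • (B - (B 0 0 + β*b) • (1 : M2')) := by
          rw [← hPs, smul_smul, inv_mul_cancel₀ hb, one_smul]
        rw [h5]
        exact V.smul_mem _ (sub_mem hBV (V.smul_mem _ hone))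
      have hQ'V : (!![α, α*β; -1, -β] : M2') ∈ V := by
        have h5 : (!![α, α*β; -1, -β] : M2') = b⁻¹ • ((B 0 0 + α*b) • (1 : M2') - B) := by
          rw [← hQs, smul_smul, inv_mul_cancel₀ hb, one_smul]
        rw [h5]
        exact V.smul_mem _ (sub_mem (V.smul_mem _ hone) hBV)
      obtain ⟨cT, hcT⟩ : ∃ y : ℂ, y = -(T 1 0 * β^2 + (T 0 0 - T 1 1) * β - T 0 1) := ⟨_, rfl⟩
      have hcT0 : cT ≠ 0 := by rw [hcT]; exact neg_ne_zero.mpr hTe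
      have hCu : IsUnit (!![1, α; 1, β] : M2').det := by
        simp only [Matrix.det_fin_two_of]
        rw [isUnit_iff_ne_zero]
        intro h8
        exact hαβ (by linear_combination -h8)
      have I11 : (!![1, α; 1, β] : M2') * !![-β, -α*β; 1, α]
          = (α - β) • (!![1,0;0,0] * !![1, α; 1, β]) := by
        ext i j
        fin_cases i <;> fin_cases j <;>
          · simp only [Matrix.mul_apply, Matrix.smul_apply, Fin.sum_univ_two,
              smul_eq_mul, Fin.mk_zero, Fin.mk_one, Matrix.of_apply, Matrix.cons_val_zero,
              Matrix.cons_val_one, Matrix.head_cons]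
            ring
      have I22 : (!![1, α; 1, β] : M2') * !![α, α*β; -1, -β]
          = (α - β) • (!![0,0;0,1] * !![1, α; 1, β]) := by
        ext i j
        fin_cases i <;> fin_cases j <;>
          · simp only [Matrix.mul_apply, Matrix.smul_apply, Fin.sum_univ_two,
              smul_eq_mul, Fin.mk_zero, Fin.mk_one, Matrix.of_apply, Matrix.cons_val_zero,
              Matrix.cons_val_one, Matrix.head_cons]
            ring
      have I12 : (!![1, α; 1, β] : M2') * ((!![-β, -α*β; 1, α] : M2') * S * !![α, α*β; -1, -β])
          = ((α - β) * (S 1 0 * α^2 + (S 0 0 - S 1 1) * α - S 0 1)) •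
            (!![0,1;0,0] * !![1, α; 1, β]) := by
        ext i j
        fin_cases i <;> fin_cases j <;>
          · simp only [Matrix.mul_apply, Matrix.smul_apply, Fin.sum_univ_two,
              smul_eq_mul, Fin.mk_zero, Fin.mk_one, Matrix.of_apply, Matrix.cons_val_zero,
              Matrix.cons_val_one, Matrix.head_cons]
            ring
      have I21 : (!![1, α; 1, β] : M2') * ((!![α, α*β; -1, -β] : M2') * T * !![-β, -α*β; 1, α])
          = ((α - β) * cT) • (!![0,0;1,0] * !![1, α; 1, β]) := by
        rw [hcT]
        ext i j
        fin_cases i <;> fin_cases j <;>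
          · simp only [Matrix.mul_apply, Matrix.smul_apply, Fin.sum_univ_two,
              smul_eq_mul, Fin.mk_zero, Fin.mk_one, Matrix.of_apply, Matrix.cons_val_zero,
              Matrix.cons_val_one, Matrix.head_cons]
            ring
      exact top_of_conj V _ hCu
        (V.smul_mem _ hP'V)
        (V.smul_mem _ (hVmul _ (hVmul _ hP'V S hSV) _ hQ'V))
        (V.smul_mem _ (hVmul _ (hVmul _ hQ'V T hTV) _ hP'V))
        (V.smul_mem _ hQ'V)
        (conj_scale hαβ I11)
        (conj_scale (mul_ne_zero hαβ hSe) I12)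
        (conj_scale (mul_ne_zero hαβ hcT0) I21)
        (conj_scale hαβ I22)

end Stmt0Aux
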